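/- (Lemma 4, Nakagami-m case.) Let m > 0, h̄ > 0, δ ∈ (0,1), and let f_N be the Gamma density with shape m and mean h̄, i.e. f_N(x) = (m/h̄)^m x^{m−1} e^{−m x/h̄}/Γ(m) on (0,∞). Then for every z > 0 with h̄ z < m (so that the Gauss hypergeometric series below converges), ∫₀^∞ ( (z x)^δ γ(1−δ, z x) − (1 − e^{−z x}) ) f_N(x) dx = (h̄ z/(1−δ)) · ₂F₁(m+1, 1−δ; 2−δ; −h̄ z/m) − ( 1 − (1 + h̄ z/m)^{−m} ). -/

import Mathlib

open Real MeasureTheory Set Filter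
open scoped Topology

/-- Pochhammer symbol `(a)_n = Γ(a+n)/Γ(a)`. -/
noncomputable def poch (a : ℝ) : ℕ → ℝ
  | 0 => 1
  | n + 1 => poch a n * (a + n)

/-- Gauss hypergeometric function `₂F₁(a, b; c; x) = Σ ((a)_n (b)_n/(c)_n) xⁿ/n!`. -/
noncomputable def hyp2F1 (a b c x : ℝ) : ℝ :=
  ∑' n : ℕ, (poch a n * poch b n / poch c n) * x ^ n / n.factorial

/-- Lower incomplete gamma function `γ(s, x) = ∫₀ˣ t^(s-1) e^(-t) dt`. -/
noncomputable def lowerGamma (s x : ℝ) : ℝ :=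
  ∫ t in Set.Ioc (0 : ℝ) x, t ^ (s - 1) * Real.exp (-t)

lemma poch_pos {a : ℝ} (ha : 0 < a) (n : ℕ) : 0 < poch a n := by
  induction n with
  | zero => simp [poch]
  | succ n ih => exact mul_pos ih (by positivity)

lemma Gamma_poch {a : ℝ} (ha : 0 < a) (n : ℕ) :
    Real.Gamma (a + n) = poch a n * Real.Gamma a := by
  induction n with
  | zero => simp [poch]
  | succ n ih =>
    have h1 : a + (n + 1 : ℕ) = (a + n) + 1 := by push_cast; ring
    rw [h1, Real.Gamma_add_one (by positivity), ih, poch]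
    ring

lemma poch_ratio {s : ℝ} (n : ℕ) : poch s n * (s + n) = s * poch (s + 1) n := by
  induction n with
  | zero => simp [poch]
  | succ n ih =>
    show poch s n * (s + n) * (s + (n+1:ℕ)) = s * (poch (s+1) n * (s + 1 + n))
    rw [ih]; push_cast; ring

lemma integrableOn_helper {a r : ℝ} (ha : 0 < a) (hr : 0 < r) :
    IntegrableOn (fun x : ℝ => x ^ (a - 1) * Real.exp (-(r * x))) (Ioi 0) := by
  have := integrableOn_rpow_mul_exp_neg_mul_rpow (by linarith : (-1:ℝ) < a - 1)
    zero_lt_one hr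
  simpa [Real.rpow_one] using this

lemma gamma_integral {a r : ℝ} (ha : 0 < a) (hr : 0 < r) :
    ∫ x in Ioi (0:ℝ), x ^ (a - 1) * Real.exp (-(r * x)) = (1 / r) ^ a * Real.Gamma a :=
  integral_rpow_mul_exp_neg_mul_Ioi ha hr

lemma rexp_tsum (x : ℝ) : Real.exp x = ∑' n : ℕ, x ^ n / n.factorial := by
  rw [Real.exp_eq_exp_ℝ, NormedSpace.exp_eq_tsum_div]

lemma integral_rpow_Ioc {y : ℝ} (hy : 0 < y) {p : ℝ} (hp : -1 < p) :
    ∫ t in Ioc (0:ℝ) y, t ^ p = y ^ (p + 1) / (p + 1) := by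
  rw [← intervalIntegral.integral_of_le hy.le, integral_rpow (Or.inl hp),
    Real.zero_rpow (by linarith)]
  ring

lemma integrableOn_rpow_Ioc {y : ℝ} (hy : 0 < y) {p : ℝ} (hp : -1 < p) :
    IntegrableOn (fun t : ℝ => t ^ p) (Ioc 0 y) :=
  (intervalIntegrable_iff_integrableOn_Ioc_of_le hy.le).mp (intervalIntegral.intervalIntegrable_rpow' hp)

lemma lowerGamma_series {s y : ℝ} (hs : 0 < s) (hy : 0 < y) :
    lowerGamma s y = ∑' n : ℕ, (-1) ^ n * y ^ (s + n) / (n.factorial * (s + n)) := by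
  set F : ℕ → ℝ → ℝ := fun n t => (-1) ^ n / n.factorial * t ^ (s - 1 + n) with hFdef
  have hexp : ∀ n : ℕ, (-1:ℝ) < s - 1 + n := by
    intro n; have : (0:ℝ) ≤ n := Nat.cast_nonneg n; linarith
  have hint : ∀ n, IntegrableOn (F n) (Ioc 0 y) := fun n =>
    ((integrableOn_rpow_Ioc hy (hexp n)).const_mul _)
  have hval : ∀ n, ∫ t in Ioc (0:ℝ) y, F n t = (-1) ^ n * y ^ (s + n) / (n.factorial * (s + n)) := by
    intro n
    rw [MeasureTheory.integral_const_mul, integral_rpow_Ioc hy (hexp n)]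
    have h5 : s - 1 + n + 1 = s + n := by ring
    have h6 : (0:ℝ) < s + n := by have := Nat.cast_nonneg (α := ℝ) n; linarith
    rw [h5]; field_simp
  have hnorm : ∀ n, ∫ t in Ioc (0:ℝ) y, ‖F n t‖ = (1 / n.factorial) * (y ^ (s + n) / (s + n)) := by
    intro n
    have : ∀ t ∈ Ioc (0:ℝ) y, ‖F n t‖ = (1 / n.factorial) * t ^ (s - 1 + n) := by
      intro t ht
      rw [Real.norm_eq_abs, abs_mul, abs_of_nonneg (Real.rpow_nonneg ht.1.le _),
        abs_div, abs_pow, abs_neg, abs_one, one_pow, Nat.abs_cast]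
    rw [setIntegral_congr_fun measurableSet_Ioc this, MeasureTheory.integral_const_mul,
      integral_rpow_Ioc hy (hexp n)]
    have : s - 1 + n + 1 = s + n := by ring
    rw [this]
  have hsum : Summable fun n => ∫ t in Ioc (0:ℝ) y, ‖F n t‖ := by
    simp_rw [hnorm]
    apply Summable.of_nonneg_of_le (fun n => by positivity)
      (fun n => ?_) ((Real.summable_pow_div_factorial y).mul_left (y ^ s / s))
    have h1 : y ^ (s + (n:ℝ)) = y ^ s * y ^ n := by
      rw [Real.rpow_add hy, Real.rpow_natCast]
    rw [h1]
    have h2 : 0 < s + (n:ℝ) := by have : (0:ℝ) ≤ n := Nat.cast_nonneg n; linarith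
    have h3 : (1:ℝ)/ n.factorial * (y ^ s * y ^ n / (s + n)) = y ^ s / (s + n) * (y ^ n / n.factorial) := by ring
    rw [h3]
    have h4 : y ^ s / (s + (n:ℝ)) ≤ y ^ s / s := by
      gcongr
      linarith [Nat.cast_nonneg (α := ℝ) n]
    exact mul_le_mul_of_nonneg_right h4 (by positivity)
  have swap := integral_tsum_of_summable_integral_norm (μ := volume.restrict (Ioc 0 y))
    (F := F) hint hsum
  have hpt : ∀ t ∈ Ioc (0:ℝ) y, (∑' n, F n t) = t ^ (s - 1) * Real.exp (-t) := by
    intro t ht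
    have ht0 : 0 < t := ht.1
    have heq : ∀ n : ℕ, F n t = t ^ (s - 1) * ((-t) ^ n / n.factorial) := by
      intro n
      rw [hFdef]
      simp only
      rw [Real.rpow_add ht0, Real.rpow_natCast, neg_pow t n]
      ring
    rw [tsum_congr heq, tsum_mul_left, ← rexp_tsum (-t)]
  calc lowerGamma s y = ∫ t in Ioc (0:ℝ) y, ∑' n, F n t := by
        exact (setIntegral_congr_fun measurableSet_Ioc hpt).symm
    _ = ∑' n, ∫ t in Ioc (0:ℝ) y, F n t := swap.symm
    _ = ∑' n : ℕ, (-1) ^ n * y ^ (s + n) / (n.factorial * (s + n)) := tsum_congr hval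

lemma integrableOn_lg_kernel {s : ℝ} (hs : 0 < s) :
    IntegrableOn (fun t : ℝ => t ^ (s - 1) * Real.exp (-t)) (Ioi 0) := by
  simpa using integrableOn_helper hs one_pos

lemma lowerGamma_nonneg (s x : ℝ) : 0 ≤ lowerGamma s x :=
  setIntegral_nonneg measurableSet_Ioc fun t ht =>
    mul_nonneg (Real.rpow_nonneg ht.1.le _) (Real.exp_pos _).le

lemma lowerGamma_mono {s : ℝ} (hs : 0 < s) : Monotone (lowerGamma s) := by
  intro a b hab
  apply setIntegral_mono_set ((integrableOn_lg_kernel hs).mono_set Ioc_subset_Ioi_self)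
  · exact (ae_restrict_iff' measurableSet_Ioc).2 (ae_of_all _ fun t ht =>
      mul_nonneg (Real.rpow_nonneg ht.1.le _) (Real.exp_pos _).le)
  · exact (Ioc_subset_Ioc_right hab).eventuallyLE

lemma lowerGamma_le_Gamma {s : ℝ} (hs : 0 < s) (x : ℝ) :
    lowerGamma s x ≤ Real.Gamma s := by
  calc lowerGamma s x ≤ ∫ t in Ioi (0:ℝ), t ^ (s - 1) * Real.exp (-t) := by
        apply setIntegral_mono_set (integrableOn_lg_kernel hs)
        · exact (ae_restrict_iff' measurableSet_Ioi).2 (ae_of_all _ fun t ht =>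
            mul_nonneg (Real.rpow_nonneg (le_of_lt ht) _) (Real.exp_pos _).le)
        · exact Ioc_subset_Ioi_self.eventuallyLE
    _ = Real.Gamma s := by
        rw [Real.Gamma_eq_integral hs]
        exact setIntegral_congr_fun measurableSet_Ioi fun t _ => mul_comm _ _

lemma summable_S {c z s m K : ℝ} (hc : 0 < c) (hz : 0 < z) (hzc : z < c)
    (hs : 0 < s) (hm : 0 < m) (hK : 0 < K) :
    Summable (fun n : ℕ => z ^ (n+1) / (n.factorial * (s + n)) * K *
      ((1 / c) ^ (m + n + 1) * Real.Gamma (m + n + 1))) := by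
  set S : ℕ → ℝ := fun n => z ^ (n+1) / (n.factorial * (s + n)) * K *
      ((1 / c) ^ (m + n + 1) * Real.Gamma (m + n + 1)) with hSdef
  have hSpos : ∀ n, 0 < S n := by
    intro n
    have h1 : (0:ℝ) < s + n := by have := Nat.cast_nonneg (α := ℝ) n; linarith
    have h2 : (0:ℝ) < m + n + 1 := by have := Nat.cast_nonneg (α := ℝ) n; linarith
    have h3 := Real.Gamma_pos_of_pos h2
    have h4 : (0:ℝ) < (n.factorial : ℝ) := by exact_mod_cast n.factorial_pos
    have h5 : (0:ℝ) < (1/c) ^ (m + (n:ℝ) + 1) := Real.rpow_pos_of_pos (by positivity) _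
    positivity
  apply summable_of_ratio_test_tendsto_lt_one (l := z / c) ((div_lt_one hc).mpr hzc)
    (Eventually.of_forall fun n => (hSpos n).ne')
  have key : ∀ n : ℕ, S (n+1) / S n =
      z / c * ((1 + m / (n + 1)) * (1 - 1 / (s + n + 1))) := by
    intro n
    have h1 : (0:ℝ) < s + n := by have := Nat.cast_nonneg (α := ℝ) n; linarith
    have h2 : (0:ℝ) < m + n + 1 := by have := Nat.cast_nonneg (α := ℝ) n; linarith
    have h3 := (Real.Gamma_pos_of_pos h2).ne'
    have h4 : ((n.factorial : ℝ)) ≠ 0 := by exact_mod_cast n.factorial_pos.ne'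
    have h5 : ((1:ℝ)/c) ^ (m + (n:ℝ) + 1) ≠ 0 := (Real.rpow_pos_of_pos (by positivity) _).ne'
    have hg : Real.Gamma (m + (n+1:ℕ) + 1) = (m + n + 1) * Real.Gamma (m + n + 1) := by
      have : m + ((n+1:ℕ):ℝ) + 1 = (m + n + 1) + 1 := by push_cast; ring
      rw [this, Real.Gamma_add_one h2.ne']
    have hp : ((1:ℝ)/c) ^ (m + ((n+1:ℕ):ℝ) + 1) = (1/c) ^ (m + (n:ℝ) + 1) * (1/c) := by
      have : m + ((n+1:ℕ):ℝ) + 1 = (m + (n:ℝ) + 1) + 1 := by push_cast; ring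
      rw [this, Real.rpow_add_one (by positivity : (1:ℝ)/c ≠ 0)]
    rw [hSdef]
    simp only
    rw [hg, hp, Nat.factorial_succ]
    push_cast
    field_simp
    ring
  rw [show 𝓝 (z/c) = 𝓝 (z/c * ((1+0)*(1-0))) by norm_num]
  apply Tendsto.congr (fun n => ?_) (by
    have t1 : Tendsto (fun n : ℕ => m / ((n:ℝ) + 1)) atTop (𝓝 0) := by
      have := (tendsto_const_div_atTop_nhds_zero_nat m).comp (tendsto_add_atTop_nat 1)
      apply this.congr
      intro n; simp only [Function.comp]; push_cast; ring_nf
    have t2 : Tendsto (fun n : ℕ => 1 / (s + (n:ℝ) + 1)) atTop (𝓝 0) := by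
      have h : Tendsto (fun n : ℕ => s + (n:ℝ) + 1) atTop atTop := by
        apply tendsto_atTop_add_const_right atTop 1
        exact tendsto_atTop_add_const_left atTop s tendsto_natCast_atTop_atTop
      exact h.inv_tendsto_atTop.congr (fun n => by simp [one_div])
    exact tendsto_const_nhds.mul ((tendsto_const_nhds.add t1).mul
      (tendsto_const_nhds.sub t2)))
  rw [Real.norm_of_nonneg (hSpos (n+1)).le, Real.norm_of_nonneg (hSpos n).le, key n]

lemma poch_div {s : ℝ} (hs : 0 < s) (n : ℕ) :
    poch s n / poch (s + 1) n = s / (s + n) := by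
  have h := poch_ratio (s := s) n
  have hp : poch (s+1) n ≠ 0 := (poch_pos (by linarith) n).ne'
  have hsn : s + (n:ℝ) ≠ 0 := by have := Nat.cast_nonneg (α := ℝ) n; positivity
  field_simp
  linarith [h]

lemma term_eq {m hbar z s : ℝ} (hm : 0 < m) (hhbar : 0 < hbar) (hz : 0 < z) (hs : 0 < s) (n : ℕ) :
    ((-1)^n * (z^(n+1) / (n.factorial * (s + n)) * ((m/hbar)^m / Real.Gamma m))) *
      ((1 / (m/hbar)) ^ (m + n + 1) * Real.Gamma (m + n + 1))
    = hbar * z / s *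
        ((poch (m+1) n * poch s n / poch (s+1) n) * (-(hbar*z)/m) ^ n / n.factorial) := by
  have hsn : (0:ℝ) < s + n := by have := Nat.cast_nonneg (α := ℝ) n; linarith
  have hmn : (0:ℝ) < m + n + 1 := by have := Nat.cast_nonneg (α := ℝ) n; linarith
  have hfac : ((n.factorial : ℝ)) ≠ 0 := by exact_mod_cast n.factorial_pos.ne'
  have hΓm := (Real.Gamma_pos_of_pos hm).ne'
  have hΓ : Real.Gamma (m + n + 1) = poch (m+1) n * (m * Real.Gamma m) := by
    have h : m + (n:ℝ) + 1 = (m+1) + n := by ring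
    rw [h, Gamma_poch (by linarith), Real.Gamma_add_one hm.ne']
  have hcd : (1 : ℝ) / (m/hbar) = hbar / m := one_div_div m hbar
  have hpow : ((1:ℝ) / (m/hbar)) ^ (m + (n:ℝ) + 1) = (hbar/m) ^ m * (hbar/m) ^ (n+1 : ℕ) := by
    have h : m + (n:ℝ) + 1 = m + ((n+1:ℕ):ℝ) := by push_cast; ring
    rw [hcd, h, Real.rpow_add (by positivity), Real.rpow_natCast]
  have hK' : (m/hbar) ^ m * (hbar/m) ^ m = (1:ℝ) := by
    rw [← Real.mul_rpow (by positivity) (by positivity),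
      show m/hbar * (hbar/m) = 1 by field_simp, Real.one_rpow]
  have hP2 : (hbar/m) ^ m = ((m/hbar) ^ m)⁻¹ := eq_inv_of_mul_eq_one_left (by
    rw [mul_comm]; exact hK')
  have hdiv := poch_div hs n
  have hq : (-(hbar*z)/m) ^ n = (-1)^n * (z * (hbar/m)) ^ n := by
    rw [show -(hbar*z)/m = -1 * (z * (hbar/m)) by ring, mul_pow]
  have hP1 : ((m/hbar) ^ m : ℝ) ≠ 0 := (Real.rpow_pos_of_pos (by positivity) _).ne'
  rw [hΓ, hpow, hq, mul_div_assoc (poch (m+1) n), hdiv, hP2]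
  field_simp
  linear_combination (z * z ^ n * hbar * hbar ^ n * m⁻¹ ^ n * poch (m + 1) n) * (mul_inv_cancel₀ hm.ne')


/-- Lemma 4 (Nakagami-m case): with `f_N` the Gamma density of shape `m` and mean `h̄`,
`∫₀^∞ ((zx)^δ γ(1−δ, zx) − (1 − e^(−zx))) f_N(x) dx
  = (h̄z/(1−δ)) ₂F₁(m+1, 1−δ; 2−δ; −h̄z/m) − (1 − (1 + h̄z/m)^(−m))`. -/
theorem nakagami_W (m hbar : ℝ) (hm : 0 < m) (hhbar : 0 < hbar)
    (δ : ℝ) (hδ0 : 0 < δ) (hδ1 : δ < 1)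
    (z : ℝ) (hz : 0 < z) (hconv : hbar * z < m) :
    (∫ x in Set.Ioi (0 : ℝ),
        ((z * x) ^ δ * lowerGamma (1 - δ) (z * x) - (1 - Real.exp (-(z * x)))) *
          ((m / hbar) ^ m * x ^ (m - 1) * Real.exp (-(m * x / hbar)) / Real.Gamma m))
      = hbar * z / (1 - δ) * hyp2F1 (m + 1) (1 - δ) (2 - δ) (-(hbar * z) / m)
        - (1 - (1 + hbar * z / m) ^ (-m)) := by
  set s : ℝ := 1 - δ with hsdef
  have hs : 0 < s := by rw [hsdef]; linarith
  set c : ℝ := m / hbar with hcdef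
  have hc : 0 < c := div_pos hm hhbar
  have hzc : z < c := by rw [hcdef, lt_div_iff₀ hhbar]; linarith [mul_comm hbar z]
  have hΓm := (Real.Gamma_pos_of_pos hm).ne'
  set K : ℝ := c ^ m / Real.Gamma m with hKdef
  have hK : 0 < K := div_pos (Real.rpow_pos_of_pos hc _) (Real.Gamma_pos_of_pos hm)
  set fden : ℝ → ℝ := fun x => K * (x ^ (m - 1) * Real.exp (-(c * x))) with hfden
  set E : ℝ → ℝ := fun x => Real.exp (-(z * x)) * fden x with hE
  set Pf : ℝ → ℝ := fun x => (z * x) ^ δ * lowerGamma s (z * x) * fden x with hPf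
  -- rewrite integrand
  have hcong : ∀ x ∈ Ioi (0:ℝ),
      ((z * x) ^ δ * lowerGamma s (z * x) - (1 - Real.exp (-(z * x)))) *
          (c ^ m * x ^ (m - 1) * Real.exp (-(m * x / hbar)) / Real.Gamma m)
        = Pf x - (fden x - E x) := by
    intro x _
    have hcx : m * x / hbar = c * x := by rw [hcdef]; ring
    rw [hcx, hPf, hE, hfden, hKdef]
    ring
  rw [setIntegral_congr_fun measurableSet_Ioi hcong]
  -- basic integrability
  have hfden_int : IntegrableOn fden (Ioi 0) := (integrableOn_helper hm hc).const_mul K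
  have hEeq : ∀ x : ℝ, E x = K * (x ^ (m - 1) * Real.exp (-((c + z) * x))) := by
    intro x
    have h2 : Real.exp (-(z * x)) * Real.exp (-(c * x)) = Real.exp (-((c + z) * x)) := by
      rw [← Real.exp_add]; congr 1; ring
    rw [hE, hfden]
    calc Real.exp (-(z * x)) * (K * (x ^ (m - 1) * Real.exp (-(c * x))))
        = K * (x ^ (m - 1) * (Real.exp (-(z * x)) * Real.exp (-(c * x)))) := by ring
      _ = K * (x ^ (m - 1) * Real.exp (-((c + z) * x))) := by rw [h2]
  have hE_int : IntegrableOn E (Ioi 0) := by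
    rw [funext hEeq]
    exact (integrableOn_helper hm (by positivity)).const_mul K
  -- measurability of Pf
  have hPf_meas : AEStronglyMeasurable Pf (volume.restrict (Ioi 0)) := by
    have A1 : Measurable fun x : ℝ => (z * x) ^ δ :=
      ((Real.continuous_rpow_const hδ0.le).comp (continuous_const.mul continuous_id)).measurable
    have A2 : Measurable fun x : ℝ => lowerGamma s (z * x) :=
      (lowerGamma_mono hs).measurable.comp (measurable_id.const_mul z)
    have A3 : ContinuousOn fden (Ioi 0) := by
      rw [hfden]
      exact continuousOn_const.mul
        ((continuousOn_id.rpow_const fun x hx => Or.inl (ne_of_gt hx)).mul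
          ((continuous_const.mul continuous_id).neg.rexp.continuousOn))
    exact ((A1.aestronglyMeasurable.mul A2.aestronglyMeasurable).mul
      (A3.aestronglyMeasurable measurableSet_Ioi))
  -- integrability of Pf
  have hPf_int : IntegrableOn Pf (Ioi 0) := by
    set G : ℝ → ℝ := fun x => Real.Gamma s * (K * z ^ δ) * (x ^ (m + δ - 1) * Real.exp (-(c * x)))
      with hG
    have hG_int : IntegrableOn G (Ioi 0) :=
      (integrableOn_helper (by linarith : (0:ℝ) < m + δ) hc).const_mul _
    apply Integrable.mono' hG_int hPf_meas
    refine (ae_restrict_iff' measurableSet_Ioi).2 (ae_of_all _ fun x hx => ?_)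
    have hx0 : 0 < x := hx
    have hfden_nn : 0 ≤ fden x := by
      rw [hfden]
      exact mul_nonneg hK.le (mul_nonneg (Real.rpow_nonneg hx0.le _) (Real.exp_pos _).le)
    have hPf_nn : 0 ≤ Pf x := by
      rw [hPf]
      exact mul_nonneg (mul_nonneg (Real.rpow_nonneg (by positivity) _)
        (lowerGamma_nonneg _ _)) hfden_nn
    rw [Real.norm_of_nonneg hPf_nn, hPf]
    have step1 : (z * x) ^ δ * lowerGamma s (z * x) * fden x
        ≤ (z * x) ^ δ * Real.Gamma s * fden x := by
      apply mul_le_mul_of_nonneg_right _ hfden_nn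
      exact mul_le_mul_of_nonneg_left (lowerGamma_le_Gamma hs _) (Real.rpow_nonneg (by positivity) _)
    refine step1.trans_eq ?_
    rw [hG, hfden, Real.mul_rpow hz.le hx0.le]
    have hxx : x ^ δ * x ^ (m - 1) = x ^ (m + δ - 1) := by
      rw [← Real.rpow_add hx0]; congr 1; ring
    calc z ^ δ * x ^ δ * Real.Gamma s * (K * (x ^ (m - 1) * Real.exp (-(c * x))))
        = Real.Gamma s * (K * z ^ δ) * (x ^ δ * x ^ (m - 1) * Real.exp (-(c * x))) := by ring
      _ = Real.Gamma s * (K * z ^ δ) * (x ^ (m + δ - 1) * Real.exp (-(c * x))) := by rw [hxx]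
  have hfE : IntegrableOn (fun x => fden x - E x) (Ioi 0) := hfden_int.sub hE_int
  rw [integral_sub hPf_int hfE, integral_sub hfden_int hE_int]
  -- ∫ fden = 1
  have I1 : ∫ x in Ioi (0:ℝ), fden x = 1 := by
    rw [hfden]
    rw [MeasureTheory.integral_const_mul, gamma_integral hm hc, hKdef]
    have h1 : ((1:ℝ)/c) ^ m = (c ^ m)⁻¹ := by rw [one_div, Real.inv_rpow hc.le]
    rw [h1]
    have h2 : (c:ℝ) ^ m ≠ 0 := (Real.rpow_pos_of_pos hc _).ne'
    field_simp
  -- ∫ E = (1 + hbar z / m)^(-m)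
  have I2 : ∫ x in Ioi (0:ℝ), E x = (1 + hbar * z / m) ^ (-m) := by
    rw [funext hEeq, MeasureTheory.integral_const_mul, gamma_integral hm (by positivity)]
    have hbase : 1 + hbar * z / m = (c + z) / c := by
      rw [hcdef]; field_simp
    rw [hbase, Real.rpow_neg (by positivity), Real.div_rpow (by positivity) hc.le]
    have h1 : ((1:ℝ)/(c + z)) ^ m = ((c + z) ^ m)⁻¹ := by
      rw [one_div, Real.inv_rpow (by positivity)]
    rw [h1, hKdef, inv_div]
    have h2 : ((c + z) : ℝ) ^ m ≠ 0 := (Real.rpow_pos_of_pos (by positivity) _).ne'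
    have h3 : (c:ℝ) ^ m ≠ 0 := (Real.rpow_pos_of_pos hc _).ne'
    field_simp
  -- the series part
  set F : ℕ → ℝ → ℝ := fun n x => ((-1)^n * (z^(n+1) / (n.factorial * (s + n)) * K)) *
      (x ^ (m + n + 1 - 1) * Real.exp (-(c * x))) with hF
  have hFint : ∀ n, IntegrableOn (F n) (Ioi 0) := fun n => by
    have : (0:ℝ) < m + n + 1 := by have := Nat.cast_nonneg (α := ℝ) n; linarith
    exact (integrableOn_helper this hc).const_mul _
  have hFval : ∀ n, ∫ x in Ioi (0:ℝ), F n x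
      = ((-1)^n * (z^(n+1) / (n.factorial * (s + n)) * K)) *
        ((1/c) ^ (m + n + 1) * Real.Gamma (m + n + 1)) := by
    intro n
    have hpos : (0:ℝ) < m + n + 1 := by have := Nat.cast_nonneg (α := ℝ) n; linarith
    rw [hF]
    simp only
    rw [MeasureTheory.integral_const_mul, gamma_integral hpos hc]
  have hFnorm : ∀ n, ∫ x in Ioi (0:ℝ), ‖F n x‖
      = z^(n+1) / (n.factorial * (s + n)) * K * ((1/c) ^ (m + n + 1) * Real.Gamma (m + n + 1)) := by
    intro n
    have hpos : (0:ℝ) < m + n + 1 := by have := Nat.cast_nonneg (α := ℝ) n; linarith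
    have hsn : (0:ℝ) < s + n := by have := Nat.cast_nonneg (α := ℝ) n; linarith
    have hfp : (0:ℝ) < n.factorial := by exact_mod_cast n.factorial_pos
    have hcoef : (0:ℝ) ≤ z^(n+1) / (n.factorial * (s + n)) * K := by positivity
    have hptw : ∀ x ∈ Ioi (0:ℝ), ‖F n x‖
        = (z^(n+1) / (n.factorial * (s + n)) * K) * (x ^ (m + n + 1 - 1) * Real.exp (-(c * x))) := by
      intro x hx
      rw [hF]
      simp only
      rw [Real.norm_eq_abs, abs_mul, abs_mul, abs_pow, abs_neg, abs_one, one_pow, one_mul,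
        abs_of_nonneg hcoef,
        abs_of_nonneg (mul_nonneg (Real.rpow_nonneg (le_of_lt hx) _) (Real.exp_pos _).le)]
    rw [setIntegral_congr_fun measurableSet_Ioi hptw, MeasureTheory.integral_const_mul,
      gamma_integral hpos hc]
  have hFsum : Summable fun n => ∫ x in Ioi (0:ℝ), ‖F n x‖ :=
    (summable_congr hFnorm).2 (summable_S hc hz hzc hs hm hK)
  have hswap := integral_tsum_of_summable_integral_norm (μ := volume.restrict (Ioi 0)) hFint hFsum
  -- pointwise identity
  have hpt : ∀ x ∈ Ioi (0:ℝ), (∑' n, F n x) = Pf x := by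
    intro x hx
    have hx0 : 0 < x := hx
    have hzx : 0 < z * x := by positivity
    rw [hPf]
    simp only
    rw [lowerGamma_series hs hzx, ← tsum_mul_left, ← tsum_mul_right]
    apply tsum_congr
    intro n
    rw [hF]
    simp only
    rw [show m + (n:ℝ) + 1 - 1 = m + (n:ℝ) by ring]
    have e1 : (z*x) ^ δ * (z*x) ^ (s + (n:ℝ)) = (z*x) ^ ((n:ℝ)+1) := by
      rw [← Real.rpow_add hzx]; congr 1; rw [hsdef]; ring
    have e2 : (z*x) ^ ((n:ℝ)+1) = z ^ (n+1:ℕ) * x ^ ((n:ℝ)+1) := by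
      rw [Real.mul_rpow hz.le hx0.le]
      congr 1
      rw [show ((n:ℝ)+1) = ((n+1:ℕ):ℝ) by push_cast; ring, Real.rpow_natCast]
    have e3 : x ^ ((n:ℝ)+1) * x ^ (m-1) = x ^ (m + (n:ℝ)) := by
      rw [← Real.rpow_add hx0]; congr 1; ring
    have master : (z*x) ^ δ * ((z*x) ^ (s + (n:ℝ)) * x ^ (m-1))
        = z ^ (n+1:ℕ) * x ^ (m + (n:ℝ)) := by
      calc (z*x) ^ δ * ((z*x) ^ (s + (n:ℝ)) * x ^ (m-1))
          = ((z*x) ^ δ * (z*x) ^ (s + (n:ℝ))) * x ^ (m-1) := by ring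
        _ = (z*x) ^ ((n:ℝ)+1) * x ^ (m-1) := by rw [e1]
        _ = z ^ (n+1:ℕ) * (x ^ ((n:ℝ)+1) * x ^ (m-1)) := by rw [e2]; ring
        _ = z ^ (n+1:ℕ) * x ^ (m + (n:ℝ)) := by rw [e3]
    have hsn : ((n.factorial : ℝ) * (s + n)) ≠ 0 := by
      have h1 : (0:ℝ) < s + n := by have := Nat.cast_nonneg (α := ℝ) n; linarith
      have h2 : (0:ℝ) < n.factorial := by exact_mod_cast n.factorial_pos
      positivity
    field_simp
    simp only [mul_comm x z]
    linear_combination (-K * Real.exp (-(c*x))) * master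
  have IA : ∫ x in Ioi (0:ℝ), Pf x = ∑' n, ∫ x in Ioi (0:ℝ), F n x := by
    rw [← (setIntegral_congr_fun measurableSet_Ioi hpt), ← hswap]
  -- sum to hypergeometric
  have IAval : ∫ x in Ioi (0:ℝ), Pf x
      = hbar * z / s * hyp2F1 (m+1) s (s+1) (-(hbar*z)/m) := by
    rw [IA]
    have hterm : ∀ n : ℕ, ∫ x in Ioi (0:ℝ), F n x
        = hbar * z / s *
          ((poch (m+1) n * poch s n / poch (s+1) n) * (-(hbar*z)/m) ^ n / n.factorial) := by
      intro n
      rw [hFval n, hKdef, hcdef]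
      exact term_eq hm hhbar hz hs n
    rw [tsum_congr hterm]
    have : hyp2F1 (m+1) s (s+1) (-(hbar*z)/m)
        = ∑' n : ℕ, (poch (m+1) n * poch s n / poch (s+1) n) * (-(hbar*z)/m) ^ n / n.factorial :=
      rfl
    rw [this, tsum_mul_left]
  have h2δ : (2:ℝ) - δ = s + 1 := by rw [hsdef]; ring
  rw [h2δ, IAval, I1, I2]
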